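/- arXiv:0807.5058 — 4 statements merged into one kernel-verified Lean document; each statement's English description precedes it below -/
import Mathlib

section
/- Let Λ be an m×n complex matrix, π an n×n diagonal matrix with strictly positive real diagonal entries, and Γ an n×m matrix satisfying ΛΓΛ = Λ and πΓΛ = Λ†Γ†π. Then for every y in the range of Λ and every n-vector z, the Pythagorean identity ‖Γy + (I − ΓΛ)z‖²_π = ‖Γy‖²_π + ‖(I − ΓΛ)z‖²_π holds, where ‖c‖²_π = Σ_i π_ii |c_i|². -/
open Matrix

/-- Pythagorean identity for a minimum-norm g-inverse:
‖Γy + (I − ΓΛ)z‖²_π = ‖Γy‖²_π + ‖(I − ΓΛ)z‖²_π for all y in the range of Λ. -/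
theorem pythagorean_min_norm_ginverse {m n : ℕ}
    (Λ : Matrix (Fin m) (Fin n) ℂ) (Γ : Matrix (Fin n) (Fin m) ℂ)
    (p : Fin n → ℝ) (hp : ∀ i, 0 < p i)
    (hΓ : Λ * Γ * Λ = Λ)
    (hmin : Matrix.diagonal (fun i => (p i : ℂ)) * (Γ * Λ) =
      Λᴴ * Γᴴ * Matrix.diagonal (fun i => (p i : ℂ))) :
    ∀ y : Fin m → ℂ, (∃ u : Fin n → ℂ, Λ.mulVec u = y) →
      ∀ z : Fin n → ℂ,
        ∑ i, p i * ‖(Γ.mulVec y +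
            ((1 : Matrix (Fin n) (Fin n) ℂ) - Γ * Λ).mulVec z) i‖ ^ 2 =
          ∑ i, p i * ‖Γ.mulVec y i‖ ^ 2 +
            ∑ i, p i * ‖((1 : Matrix (Fin n) (Fin n) ℂ) - Γ * Λ).mulVec z i‖ ^ 2 := by
  rintro y ⟨u, hu⟩ z
  set G := Γ * Λ with hGdef
  set D := Matrix.diagonal (fun i => (p i : ℂ)) with hDdef
  have hD : Dᴴ = D := by
    rw [hDdef]
    ext i j
    by_cases h : i = j
    · simp [Matrix.conjTranspose_apply, Matrix.diagonal_apply, h]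
    · simp [Matrix.conjTranspose_apply, Matrix.diagonal_apply, h, Ne.symm h]
  have hGG : G * G = G := by
    rw [hGdef, Matrix.mul_assoc, ← Matrix.mul_assoc Λ Γ Λ, hΓ]
  have key : Gᴴ * D = D * G := by
    have h := congrArg Matrix.conjTranspose hmin
    simp only [Matrix.conjTranspose_mul, hD, Matrix.conjTranspose_conjTranspose] at h
    exact h
  have hM : Gᴴ * (D * (1 - G)) = 0 := by
    have h0 : G * (1 - G) = 0 := by rw [Matrix.mul_sub, Matrix.mul_one, hGG, sub_self]
    rw [← Matrix.mul_assoc, key, Matrix.mul_assoc, h0, Matrix.mul_zero]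
  set a : Fin n → ℂ := G.mulVec u with ha
  set b : Fin n → ℂ := (1 - G).mulVec z with hb
  have hay : Γ.mulVec y = a := by rw [← hu, Matrix.mulVec_mulVec, ha, hGdef]
  have hS : star a ⬝ᵥ D.mulVec b = 0 := by
    rw [ha, hb, Matrix.star_mulVec, Matrix.mulVec_mulVec, Matrix.dotProduct_mulVec,
      Matrix.vecMul_vecMul, hM, Matrix.vecMul_zero, zero_dotProduct]
  have hScoord : ∑ i, ((p i : ℂ) * (star (a i) * b i)) = 0 := by
    rw [← hS]
    simp only [dotProduct, hDdef, Matrix.mulVec_diagonal, Pi.star_apply]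
    congr 1
    funext i
    ring
  have hre : ∑ i, p i * (star (a i) * b i).re = 0 := by
    have := congrArg Complex.re hScoord
    simpa [Complex.re_sum, Complex.ofReal_mul] using this
  rw [hay]
  have expand : ∀ i, ‖a i + b i‖ ^ 2 = ‖a i‖ ^ 2 + ‖b i‖ ^ 2 + 2 * (star (a i) * b i).re := by
    intro i
    have h1 : ∀ w : ℂ, ‖w‖ ^ 2 = Complex.normSq w := fun w => by
      rw [Complex.sq_norm]
    rw [h1, h1, h1, Complex.normSq_add]
    simp [Complex.star_def, Complex.mul_re]
  calc ∑ i, p i * ‖(a + b) i‖ ^ 2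
      = ∑ i, (p i * ‖a i‖ ^ 2 + p i * ‖b i‖ ^ 2 + 2 * (p i * (star (a i) * b i).re)) := by
        apply Finset.sum_congr rfl
        intro i _
        simp only [Pi.add_apply, expand i]
        ring
    _ = ∑ i, p i * ‖a i‖ ^ 2 + ∑ i, p i * ‖b i‖ ^ 2 := by
        rw [Finset.sum_add_distrib, ← Finset.mul_sum, hre, mul_zero, add_zero,
          Finset.sum_add_distrib]
end

section
/- Let Λ be an m×n complex matrix, π an n×n diagonal matrix with strictly positive real diagonal entries, and Γ a generalized inverse of Λ (ΛΓΛ = Λ). Suppose that for all n-vectors z and u, 0 ≤ ‖(I − ΓΛ)z‖²_π + z†(I − Λ†Γ†)πΓΛu + u†Λ†Γ†π(I − ΓΛ)z, where ‖c‖²_π = Σ_i π_ii |c_i|². Then (I − Λ†Γ†)πΓΛ = 0. -/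
open Matrix ComplexOrder

lemma conj_dot {n : ℕ} (A : Matrix (Fin n) (Fin n) ℂ) (z u : Fin n → ℂ) :
    star u ⬝ᵥ Aᴴ.mulVec z = star (star z ⬝ᵥ A.mulVec u) := by
  simp [dotProduct, mulVec, conjTranspose_apply, Finset.mul_sum, map_sum]
  rw [Finset.sum_comm]
  congr 1; ext i; congr 1; ext j; ring

/-- if for all vectors z, u the quantity
‖(I − ΓΛ)z‖²_π + z†(I − Λ†Γ†)πΓΛu + u†Λ†Γ†π(I − ΓΛ)z is nonnegative
(as a complex number, i.e. real and ≥ 0), then (I − Λ†Γ†)πΓΛ = 0. -/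
theorem cross_term_zero_of_nonneg {m n : ℕ}
    (Λ : Matrix (Fin m) (Fin n) ℂ) (Γ : Matrix (Fin n) (Fin m) ℂ)
    (p : Fin n → ℝ) (hp : ∀ i, 0 < p i)
    (hΓ : Λ * Γ * Λ = Λ)
    (hpos : ∀ z u : Fin n → ℂ,
      (0 : ℂ) ≤
        ((∑ i, p i * ‖((1 : Matrix (Fin n) (Fin n) ℂ) - Γ * Λ).mulVec z i‖ ^ 2 : ℝ) : ℂ)
        + star z ⬝ᵥ (((1 : Matrix (Fin n) (Fin n) ℂ) - Λᴴ * Γᴴ) *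
            (Matrix.diagonal (fun i => (p i : ℂ)) * (Γ * Λ))).mulVec u
        + star u ⬝ᵥ (Λᴴ * Γᴴ * Matrix.diagonal (fun i => (p i : ℂ)) *
            ((1 : Matrix (Fin n) (Fin n) ℂ) - Γ * Λ)).mulVec z) :
    ((1 : Matrix (Fin n) (Fin n) ℂ) - Λᴴ * Γᴴ) *
      (Matrix.diagonal (fun i => (p i : ℂ)) * (Γ * Λ)) = 0 := by
  set M : Matrix (Fin n) (Fin n) ℂ :=
    ((1 : Matrix (Fin n) (Fin n) ℂ) - Λᴴ * Γᴴ) *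
      (Matrix.diagonal (fun i => (p i : ℂ)) * (Γ * Λ)) with hM
  have hN : Λᴴ * Γᴴ * Matrix.diagonal (fun i => (p i : ℂ)) *
      ((1 : Matrix (Fin n) (Fin n) ℂ) - Γ * Λ) = Mᴴ := by
    have hd : (star fun i => ((p i : ℂ))) = fun i => ((p i : ℂ)) := by
      funext i; simp [Complex.conj_ofReal]
    rw [hM]
    simp only [conjTranspose_mul, conjTranspose_sub, conjTranspose_one,
      conjTranspose_conjTranspose, diagonal_conjTranspose]
    rw [hd]
  have key : ∀ z u : Fin n → ℂ, star z ⬝ᵥ M.mulVec u = 0 := by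
    intro z u
    by_contra hS
    set S := star z ⬝ᵥ M.mulVec u with hSdef
    set Q : ℝ := ∑ i, p i * ‖((1 : Matrix (Fin n) (Fin n) ℂ) - Γ * Λ).mulVec z i‖ ^ 2 with hQ
    have hnorm : (0:ℝ) < Complex.normSq S := by
      simpa [Complex.normSq_pos] using hS
    set t : ℝ := (Q + 1) / (2 * Complex.normSq S) with ht
    have h1 := hpos z (((-t : ℂ) * star S) • u)
    rw [hN] at h1
    rw [Matrix.mulVec_smul, dotProduct_smul, conj_dot M z (((-t : ℂ) * star S) • u),
      Matrix.mulVec_smul, dotProduct_smul] at h1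
    have hexpr : ((Q : ℂ)) + ((-t : ℂ) * star S) • S
        + star (((-t : ℂ) * star S) • S) = ((Q - 2 * t * Complex.normSq S : ℝ) : ℂ) := by
      have h2 : star S * S = (Complex.normSq S : ℂ) := by
        rw [Complex.star_def, mul_comm]; exact Complex.mul_conj S
      have e2 : ((-t : ℂ) * star S) * S = ((-t * Complex.normSq S : ℝ) : ℂ) := by
        rw [mul_assoc, h2]; push_cast; ring
      simp only [smul_eq_mul]
      rw [e2, Complex.star_def, Complex.conj_ofReal]
      push_cast; ring
    rw [hexpr] at h1
    rw [Complex.zero_le_real] at h1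
    rw [ht] at h1
    have : 2 * ((Q + 1) / (2 * Complex.normSq S)) * Complex.normSq S = Q + 1 := by
      field_simp
    rw [this] at h1
    linarith
  ext i j
  have := key (Pi.single i 1) (Pi.single j 1)
  simpa [dotProduct, mulVec, Pi.single_apply, apply_ite, Finset.sum_ite_eq,
    Finset.mul_sum] using this
end

section
/- Let Λ be an m×n complex matrix, M an n×n Hermitian idempotent with Λ(I − M) = 0 (equivalently ΛM = Λ), π any n×n complex matrix, and set A := (I − M)π(I − M). Let B be an n×n matrix satisfying the Penrose conditions BAB = B and (BA)† = BA. Then (I − M)B = B, and consequently ΛB = 0. -/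
open Matrix

/-- with M a Hermitian idempotent, Λ(I − M) = 0, A = (I − M)π(I − M),
and B satisfying BAB = B and (BA)† = BA, one has (I − M)B = B and ΛB = 0. -/
theorem pinv_range_and_kernel {m n : ℕ}
    (Λ : Matrix (Fin m) (Fin n) ℂ)
    (M : Matrix (Fin n) (Fin n) ℂ)
    (hM : Mᴴ = M) (hM2 : M * M = M)
    (hΛM : Λ * ((1 : Matrix (Fin n) (Fin n) ℂ) - M) = 0)
    (π : Matrix (Fin n) (Fin n) ℂ)
    (B : Matrix (Fin n) (Fin n) ℂ)
    (hBAB : B * (((1 : Matrix (Fin n) (Fin n) ℂ) - M) * π *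
        ((1 : Matrix (Fin n) (Fin n) ℂ) - M)) * B = B)
    (hBA : (B * (((1 : Matrix (Fin n) (Fin n) ℂ) - M) * π *
        ((1 : Matrix (Fin n) (Fin n) ℂ) - M)))ᴴ =
      B * (((1 : Matrix (Fin n) (Fin n) ℂ) - M) * π *
        ((1 : Matrix (Fin n) (Fin n) ℂ) - M))) :
    ((1 : Matrix (Fin n) (Fin n) ℂ) - M) * B = B ∧ Λ * B = 0 := by
  set Q : Matrix (Fin n) (Fin n) ℂ := (1 : Matrix (Fin n) (Fin n) ℂ) - M with hQdef
  have hQH : Qᴴ = Q := by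
    simp [hQdef, conjTranspose_sub, hM]
  have hQ2 : Q * Q = Q := by
    simp only [hQdef, sub_mul, mul_sub, one_mul, mul_one, hM2]
    abel
  have hrw : B * (Q * π * Q) = Q * (πᴴ * (Q * (Bᴴ * B))) → True := fun _ => trivial
  have hBAeq : B * (Q * π * Q) = Q * πᴴ * Q * Bᴴ := by
    conv_lhs => rw [← hBA]
    simp [conjTranspose_mul, hQH, Matrix.mul_assoc]
  have hB : B = Q * (πᴴ * Q * Bᴴ * B) := by
    conv_lhs => rw [← hBAB, hBAeq]
    noncomm_ring
  have h1 : Q * B = B := by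
    conv_lhs => rw [hB, ← Matrix.mul_assoc, hQ2]
    exact hB.symm
  refine ⟨h1, ?_⟩
  calc Λ * B = Λ * Q * B := by rw [Matrix.mul_assoc, h1]
    _ = 0 := by rw [hΛM, Matrix.zero_mul]
end

section
/- Let Λ be an m×n complex matrix and Γ_mp a matrix satisfying the Moore–Penrose conditions Γ_mpΛΓ_mp = Γ_mp, ΛΓ_mpΛ = Λ, (Γ_mpΛ)† = Γ_mpΛ, (ΛΓ_mp)† = ΛΓ_mp; set M := Γ_mpΛ. Let π be an n×n diagonal matrix with strictly positive real diagonal entries, A := (I − M)π(I − M), and let B satisfy the Penrose conditions ABA = A, BAB = B, (AB)† = AB, (BA)† = BA. Then the matrix Γ_opt := Γ_mp − BπMΓ_mp is a generalized inverse of Λ: ΛΓ_optΛ = Λ. -/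
open Matrix

/-- Γ_opt := Γ_mp − BπMΓ_mp is a generalized inverse of Λ,
where M = Γ_mpΛ and B is the Moore–Penrose inverse of A = (I − M)π(I − M). -/
theorem gamma_opt_is_ginverse {m n : ℕ}
    (Λ : Matrix (Fin m) (Fin n) ℂ) (Γmp : Matrix (Fin n) (Fin m) ℂ)
    (h1 : Γmp * Λ * Γmp = Γmp)
    (h2 : Λ * Γmp * Λ = Λ)
    (h3 : (Γmp * Λ)ᴴ = Γmp * Λ)
    (h4 : (Λ * Γmp)ᴴ = Λ * Γmp)
    (p : Fin n → ℝ) (hp : ∀ i, 0 < p i)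
    (B : Matrix (Fin n) (Fin n) ℂ)
    (hABA : (((1 : Matrix (Fin n) (Fin n) ℂ) - Γmp * Λ) *
        Matrix.diagonal (fun i => (p i : ℂ)) *
        ((1 : Matrix (Fin n) (Fin n) ℂ) - Γmp * Λ)) * B *
        (((1 : Matrix (Fin n) (Fin n) ℂ) - Γmp * Λ) *
        Matrix.diagonal (fun i => (p i : ℂ)) *
        ((1 : Matrix (Fin n) (Fin n) ℂ) - Γmp * Λ)) =
      ((1 : Matrix (Fin n) (Fin n) ℂ) - Γmp * Λ) *
        Matrix.diagonal (fun i => (p i : ℂ)) *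
        ((1 : Matrix (Fin n) (Fin n) ℂ) - Γmp * Λ))
    (hBAB : B * (((1 : Matrix (Fin n) (Fin n) ℂ) - Γmp * Λ) *
        Matrix.diagonal (fun i => (p i : ℂ)) *
        ((1 : Matrix (Fin n) (Fin n) ℂ) - Γmp * Λ)) * B = B)
    (hAB : ((((1 : Matrix (Fin n) (Fin n) ℂ) - Γmp * Λ) *
        Matrix.diagonal (fun i => (p i : ℂ)) *
        ((1 : Matrix (Fin n) (Fin n) ℂ) - Γmp * Λ)) * B)ᴴ =
      (((1 : Matrix (Fin n) (Fin n) ℂ) - Γmp * Λ) *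
        Matrix.diagonal (fun i => (p i : ℂ)) *
        ((1 : Matrix (Fin n) (Fin n) ℂ) - Γmp * Λ)) * B)
    (hBA : (B * (((1 : Matrix (Fin n) (Fin n) ℂ) - Γmp * Λ) *
        Matrix.diagonal (fun i => (p i : ℂ)) *
        ((1 : Matrix (Fin n) (Fin n) ℂ) - Γmp * Λ)))ᴴ =
      B * (((1 : Matrix (Fin n) (Fin n) ℂ) - Γmp * Λ) *
        Matrix.diagonal (fun i => (p i : ℂ)) *
        ((1 : Matrix (Fin n) (Fin n) ℂ) - Γmp * Λ))) :
    Λ * (Γmp - B * Matrix.diagonal (fun i => (p i : ℂ)) * (Γmp * Λ) * Γmp) * Λ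
      = Λ := by
  set π : Matrix (Fin n) (Fin n) ℂ := Matrix.diagonal (fun i => (p i : ℂ)) with hπ
  set A : Matrix (Fin n) (Fin n) ℂ :=
    ((1 : Matrix (Fin n) (Fin n) ℂ) - Γmp * Λ) * π *
      ((1 : Matrix (Fin n) (Fin n) ℂ) - Γmp * Λ) with hA
  have hπH : πᴴ = π := by
    rw [hπ]
    ext i j
    by_cases h : i = j <;>
      simp [Matrix.conjTranspose_apply, Matrix.diagonal_apply, h, eq_comm]
  have hMH : ((1 : Matrix (Fin n) (Fin n) ℂ) - Γmp * Λ)ᴴ = 1 - Γmp * Λ := by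
    simp [conjTranspose_sub, h3]
  have hAH : Aᴴ = A := by
    rw [hA, conjTranspose_mul, conjTranspose_mul, hπH, hMH, Matrix.mul_assoc]
  have h0 : Λ * ((1 : Matrix (Fin n) (Fin n) ℂ) - Γmp * Λ) = 0 := by
    rw [Matrix.mul_sub, Matrix.mul_one, ← Matrix.mul_assoc, h2, sub_self]
  have hΛA : Λ * A = 0 := by
    rw [hA, ← Matrix.mul_assoc, ← Matrix.mul_assoc, h0, Matrix.zero_mul,
      Matrix.zero_mul]
  have hΛB : Λ * B = 0 := by
    have hBA' : B * A = A * Bᴴ := by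
      conv_lhs => rw [← hBA, conjTranspose_mul, hAH]
    calc Λ * B = Λ * (B * A * B) := by rw [hBAB]
      _ = Λ * (A * Bᴴ * B) := by rw [hBA']
      _ = Λ * A * Bᴴ * B := by simp only [Matrix.mul_assoc]
      _ = 0 := by rw [hΛA, Matrix.zero_mul, Matrix.zero_mul]
  have hterm : Λ * (B * π * (Γmp * Λ) * Γmp) = 0 := by
    rw [show B * π * (Γmp * Λ) * Γmp = B * (π * (Γmp * Λ) * Γmp) by
      simp only [Matrix.mul_assoc], ← Matrix.mul_assoc, hΛB, Matrix.zero_mul]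
  rw [Matrix.mul_sub, Matrix.sub_mul, hterm, Matrix.zero_mul, sub_zero, h2]
end
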